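/- Let K = Q(√D) with D squarefree, D ∉ {0,1}. The ring of all generalized polynomials in one variable z over K taking values in Q (i.e., g(α) ∈ Q for all α ∈ K) equals the Q-subalgebra of K[z, τ(z)] generated by z + τ(z) and √D·(z − τ(z)). -/

import Mathlib

open MvPolynomial

/-- The ring of ℚ-valued generalized polynomials in one variable over K = ℚ(√D)
(polynomials in z and τ(z)) equals ℚ[z + τ(z), √D·(z − τ(z))]. -/
theorem stmt_2 (D : ℤ) (hsq : Squarefree D) (hD0 : D ≠ 0) (hD1 : D ≠ 1)
    (K : Type*) [Field K] [Algebra ℚ K] (sd : K) (hsd : sd ^ 2 = (D : K))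
    (hgen : ∀ x : K, ∃ a b : ℚ, x = algebraMap ℚ K a + algebraMap ℚ K b * sd)
    (τ : K →ₐ[ℚ] K) (hτ : τ sd = -sd) :
    ∀ g : MvPolynomial Bool K,
      (∀ a : K,
        MvPolynomial.eval (fun b => if b then τ a else a) g ∈ (algebraMap ℚ K).range)
      ↔ g ∈ Algebra.adjoin ℚ
          ({MvPolynomial.X false + MvPolynomial.X true,
            MvPolynomial.C sd * (MvPolynomial.X false - MvPolynomial.X true)} :
            Set (MvPolynomial Bool K)) := by
  intro g
  set φ : ℚ →+* K := algebraMap ℚ K with hφdef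
  have hφinj : Function.Injective φ := (algebraMap ℚ K).injective
  have hDQ : (D : ℚ) ≠ 0 := Int.cast_ne_zero.mpr hD0
  have hDK : (D : K) = φ (D : ℚ) := (map_intCast φ D).symm
  -- sd is irrational
  have hirr : ∀ q : ℚ, φ q ≠ sd := by
    intro q hq
    have h2 : q ^ 2 = (D : ℚ) := by
      apply hφinj
      rw [map_pow, hq, hsd, hDK]
    have hint : IsIntegral ℤ q := by
      refine ⟨Polynomial.X ^ 2 - Polynomial.C D, Polynomial.monic_X_pow_sub_C D two_ne_zero, ?_⟩
      rw [Polynomial.eval₂_sub, Polynomial.eval₂_pow, Polynomial.eval₂_X, Polynomial.eval₂_C, h2]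
      simp
    obtain ⟨n, hn⟩ := IsIntegrallyClosed.isIntegral_iff.mp hint
    have hnq : (n : ℚ) = q := by exact_mod_cast hn
    have hn2 : n * n = D := by
      have : ((n * n : ℤ) : ℚ) = ((D : ℤ) : ℚ) := by
        push_cast [hnq]; rw [← h2]; ring
      exact_mod_cast this
    have hu : IsUnit n := hsq n ⟨1, by rw [mul_one, hn2]⟩
    rcases Int.isUnit_iff.mp hu with h | h <;>
      (rw [h] at hn2; norm_num at hn2; exact hD1 hn2.symm)
  -- notation for the generators and substitutions
  set u : MvPolynomial Bool K := X false + X true with hu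
  set v : MvPolynomial Bool K := C sd * (X false - X true) with hv
  set e : Bool → MvPolynomial Bool K :=
    fun b => if b then X false - C sd * X true else X false + C sd * X true with he
  set f : Bool → MvPolynomial Bool K :=
    fun b => if b then C (φ ((2 * (D : ℚ))⁻¹)) * v else C (φ 2⁻¹) * u with hf
  have hsd2 : sd * sd = φ (D : ℚ) := by rw [← hDK, ← hsd]; ring
  have hsdC : (C sd : MvPolynomial Bool K) * C (φ ((2 * (D : ℚ))⁻¹)) * C sd
      = C (φ (2⁻¹ : ℚ)) := by
    rw [← C_mul, ← C_mul]
    congr 1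
    calc sd * φ ((2 * (D : ℚ))⁻¹) * sd = φ ((2 * (D : ℚ))⁻¹) * (sd * sd) := by ring
      _ = φ ((2 * (D : ℚ))⁻¹ * (D : ℚ)) := by rw [hsd2, ← map_mul]
      _ = φ 2⁻¹ := by congr 1; field_simp
  have h1 : (C (φ (2⁻¹ : ℚ)) : MvPolynomial Bool K) + C (φ (2⁻¹ : ℚ)) = 1 := by
    rw [← C_add, ← map_add]
    norm_num
  have hfe : ∀ b, bind₁ f (e b) = X b := by
    intro b
    cases b <;>
      simp only [he, hf, hu, hv, if_true, if_false, Bool.false_eq_true, map_add, map_sub,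
        map_mul, bind₁_X_right, bind₁_C_right]
    · linear_combination (X false - X true : MvPolynomial Bool K) * hsdC + X false * h1
    · linear_combination (X true - X false : MvPolynomial Bool K) * hsdC + X true * h1
  have hbind : ∀ p : MvPolynomial Bool K, bind₁ f (bind₁ e p) = p := by
    intro p
    rw [bind₁_bind₁]
    have : (fun i => bind₁ f (e i)) = (X : Bool → MvPolynomial Bool K) := funext hfe
    rw [this, bind₁_X_left, AlgHom.id_apply]
  have hevalb : ∀ (y : Bool → K) (w : Bool → MvPolynomial Bool K) (p : MvPolynomial Bool K),
      eval y (bind₁ w p) = eval (fun i => eval y (w i)) p := by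
    intro y w p
    have := aeval_bind₁ (R := K) y w p
    simpa [aeval_eq_eval₂Hom, Algebra.algebraMap_self] using this
  -- evaluation of the e-substitution at rational points
  have heval_e : ∀ x : Bool → ℚ,
      eval (fun b => φ (x b)) (bind₁ e g)
        = eval (fun b => if b then τ (φ (x false) + φ (x true) * sd)
            else (φ (x false) + φ (x true) * sd)) g := by
    intro x
    have hτa : τ (φ (x false) + φ (x true) * sd) = φ (x false) - φ (x true) * sd := by
      rw [map_add, map_mul, hτ]
      have h1 : τ (φ (x false)) = φ (x false) := τ.commutes _
      have h2 : τ (φ (x true)) = φ (x true) := τ.commutes _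
      rw [h1, h2]; ring
    rw [hevalb]
    have hfun : (fun i => eval (fun b => φ (x b)) (e i))
        = fun b => if b then τ (φ (x false) + φ (x true) * sd)
            else (φ (x false) + φ (x true) * sd) := by
      funext b
      cases b <;>
        simp only [he, if_true, if_false, Bool.false_eq_true, map_add, map_sub, map_mul,
          eval_X, eval_C, hτa] <;>
        ring
    rw [hfun]
  constructor
  · -- hard direction
    intro H
    set h : MvPolynomial Bool K := bind₁ e g with hh
    choose rr ss hspec using hgen
    classical
    set P0 : MvPolynomial Bool ℚ :=
      h.support.sum (fun m => monomial m (rr (coeff m h))) with hP0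
    set Q0 : MvPolynomial Bool ℚ :=
      h.support.sum (fun m => monomial m (ss (coeff m h))) with hQ0
    have hcoeff : ∀ (c : K → ℚ) (m : Bool →₀ ℕ),
        coeff m (h.support.sum (fun m' => monomial m' (c (coeff m' h))))
          = if m ∈ h.support then c (coeff m h) else 0 := by
      intro c m
      rw [MvPolynomial.coeff_sum]
      rw [Finset.sum_congr rfl (fun m' _ => MvPolynomial.coeff_monomial m m' (c (coeff m' h)))]
      exact Finset.sum_ite_eq' h.support m (fun m' => c (coeff m' h))
    have hdec : h = map φ P0 + C sd * map φ Q0 := by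
      apply MvPolynomial.ext
      intro m
      simp only [coeff_add, coeff_map, coeff_C_mul, hP0, hQ0, hcoeff]
      by_cases hm : m ∈ h.support
      · rw [if_pos hm, if_pos hm]
        conv_lhs => rw [hspec (coeff m h)]
        ring
      · rw [if_neg hm, if_neg hm]
        simp only [map_zero, mul_zero, add_zero]
        exact (MvPolynomial.notMem_support_iff.mp hm)
    -- evaluation of a mapped polynomial at a rational point
    have hmapeval : ∀ (x : Bool → ℚ) (p : MvPolynomial Bool ℚ),
        eval (fun b => φ (x b)) (map φ p) = φ (eval x p) := by
      intro x p
      have h0 := MvPolynomial.eval₂_comp_left φ (RingHom.id ℚ) x p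
      rw [MvPolynomial.eval₂_id, RingHom.comp_id] at h0
      rw [eval_map]
      exact h0.symm
    have hQ0z : Q0 = 0 := by
      apply MvPolynomial.funext
      intro x
      rw [map_zero]
      have hrange : eval (fun b => φ (x b)) h ∈ φ.range := by
        rw [hh, heval_e x]; exact H _
      rw [hdec, map_add, map_mul, eval_C, hmapeval, hmapeval] at hrange
      obtain ⟨t, ht⟩ := hrange
      by_contra hne
      apply hirr ((t - eval x P0) / eval x Q0)
      have hQne : φ (eval x Q0) ≠ 0 := fun hz => hne (hφinj (by rw [hz, map_zero]))
      rw [map_div₀, map_sub, div_eq_iff hQne, ht]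
      ring
    have hP : h = map φ P0 := by
      rw [hdec, hQ0z, map_zero, mul_zero, add_zero]
    have hgf : g = bind₁ f (map φ P0) := by
      rw [← hP, hh]
      exact (hbind g).symm
    rw [hgf]
    -- membership of the generators
    have hfmem : ∀ b, f b ∈ Algebra.adjoin ℚ ({u, v} : Set (MvPolynomial Bool K)) := by
      intro b
      have hCmem : ∀ q : ℚ, (C (φ q) : MvPolynomial Bool K)
          ∈ Algebra.adjoin ℚ ({u, v} : Set (MvPolynomial Bool K)) := by
        intro q
        have : (C (φ q) : MvPolynomial Bool K) = algebraMap ℚ _ q :=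
          (MvPolynomial.algebraMap_apply q).symm
        rw [this]
        exact Subalgebra.algebraMap_mem _ q
      cases b <;> simp only [hf, if_true, if_false, Bool.false_eq_true]
      · exact mul_mem (hCmem _) (Algebra.subset_adjoin (Set.mem_insert _ _))
      · exact mul_mem (hCmem _) (Algebra.subset_adjoin (Set.mem_insert_of_mem _ rfl))
    -- induction over P0
    induction P0 using MvPolynomial.induction_on with
    | C r =>
      rw [map_C]
      rw [bind₁_C_right]
      have : (C (φ r) : MvPolynomial Bool K) = algebraMap ℚ _ r :=
        (MvPolynomial.algebraMap_apply r).symm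
      rw [this]
      exact Subalgebra.algebraMap_mem _ r
    | add p q hp hq =>
      rw [map_add, map_add]
      exact add_mem hp hq
    | mul_X p i hp =>
      rw [map_mul, map_mul, map_X, bind₁_X_right]
      exact mul_mem hp (hfmem i)
  · -- easy direction
    intro hg a
    clear heval_e hbind
    obtain ⟨A, B, hab⟩ := hgen a
    have hτa : τ a = φ A - φ B * sd := by
      rw [hab, map_add, map_mul, hτ]
      have h1 : τ (φ A) = φ A := τ.commutes _
      have h2 : τ (φ B) = φ B := τ.commutes _
      rw [h1, h2]; ring
    induction hg using Algebra.adjoin_induction with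
    | mem x hx =>
      rcases hx with hx | hx
      · subst hx
        refine ⟨A + A, ?_⟩
        rw [hu]
        have hev : (eval fun b => if b = true then τ a else a)
            ((X false : MvPolynomial Bool K) + X true) = a + τ a := by simp
        rw [hev, hτa, hab, map_add]; ring
      · rw [Set.mem_singleton_iff] at hx
        subst hx
        refine ⟨B * (2 * D), ?_⟩
        rw [hv]
        have hev : (eval fun b => if b = true then τ a else a)
            (C sd * ((X false : MvPolynomial Bool K) - X true)) = sd * (a - τ a) := by simp
        have hL : φ (B * (2 * (D : ℚ))) = φ B * 2 * φ (D : ℚ) := by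
          rw [map_mul, map_mul, map_ofNat]; ring
        rw [hev, hτa, hab, hL, ← hsd2]; ring
    | algebraMap r =>
      refine ⟨r, ?_⟩
      rw [MvPolynomial.algebraMap_apply, eval_C]
    | add x y hx hy ihx ihy =>
      rw [map_add]; exact add_mem ihx ihy
    | mul x y hx hy ihx ihy =>
      rw [map_mul]; exact mul_mem ihx ihy
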